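/- Let H be a complex Hilbert space and let (A_n)_{n ∈ ℕ} be a sequence of positive operators in B(H) such that for every x ∈ H the series ∑_n A_n x converges in H to x (i.e., ∑_n A_n = 1 in the strong operator topology). Let Φ : B(H) → B(H) be the associated Lüders operation in the Heisenberg picture, i.e., the linear map satisfying ⟪Φ(S) x, y⟫ = ∑'_n ⟪S (A_n^{1/2} x), A_n^{1/2} y⟫ for all S ∈ B(H) and x, y ∈ H, where A_n^{1/2} denotes the positive square root of A_n and each such scalar family is summable. Let B ∈ B(H) satisfy Φ(B) = B. Then the following are equivalent: (i) B ∘ A_n = A_n ∘ B for every n; (ii) Φ(B*B) = B*B and Φ(BB*) = BB*; (iii) Φ(b) = b for every b ∈ C*(1,B). -/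

import Mathlib

open scoped InnerProductSpace

set_option maxHeartbeats 2000000
set_option synthInstance.maxHeartbeats 2000000

section Aux

lemma my_isClosed_centralizer {A : Type*} [NormedRing A] (s : Set A) :
    IsClosed (Set.centralizer s) := by
  have h : Set.centralizer s = ⋂ c ∈ s, {x : A | c * x = x * c} := by
    ext x
    simp [Set.mem_centralizer_iff]
  rw [h]
  exact isClosed_biInter fun c _ => isClosed_eq
    (continuous_const.mul continuous_id) (continuous_id.mul continuous_const)

lemma my_cfc_complex_mem_elemental {A : Type*} [CStarAlgebra A]
    (a : A) (g : ℂ → ℂ) (ha : IsStarNormal a) :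
    cfc g a ∈ StarAlgebra.elemental ℂ a := by
  apply cfc_cases (· ∈ StarAlgebra.elemental ℂ a) a g (zero_mem _)
  intro hg ha'
  rw [cfcHom_eq_of_isStarNormal]
  exact SetLike.coe_mem _

lemma my_sqrt_mem_elemental {A : Type*} [CStarAlgebra A] [PartialOrder A] [StarOrderedRing A]
    (a : A) (ha : 0 ≤ a) :
    CFC.sqrt a ∈ StarAlgebra.elemental ℂ a := by
  have hsa : IsSelfAdjoint a := .of_nonneg ha
  rw [CFC.sqrt_eq_cfc, cfc_nnreal_eq_real _ a ha, cfc_real_eq_complex _ hsa]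
  exact my_cfc_complex_mem_elemental a _ hsa.isStarNormal

end Aux

/-- **Proposition 1.1 (fixed points of Lüders operations).** Let `(A_n)` be a sequence of
positive operators on `H` with `∑ A_n = 1` in the strong operator topology, let `R n` be
the positive square root of `A n`, and let `Φ` be the associated Lüders operation in the
Heisenberg picture, `⟪Φ(S) x, y⟫ = ∑' n, ⟪S (A_n^{1/2} x), A_n^{1/2} y⟫`. If `B ∈ B(H)`
is a fixed point of `Φ`, then the following are equivalent:
(i) `B` commutes with every `A_n`;
(ii) `B*B` and `BB*` are fixed points of `Φ`;
(iii) every element of `C*(1,B)` is fixed by `Φ`. -/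
theorem lueders_fixed_point_propagation {H : Type*}
    [NormedAddCommGroup H] [InnerProductSpace ℂ H] [CompleteSpace H]
    (A : ℕ → (H →L[ℂ] H)) (hA : ∀ n, (A n).IsPositive)
    (hAsum : ∀ x : H, HasSum (fun n => A n x) x)
    (R : ℕ → (H →L[ℂ] H)) (hR : ∀ n, (R n).IsPositive) (hR2 : ∀ n, R n * R n = A n)
    (Φ : (H →L[ℂ] H) →ₗ[ℂ] (H →L[ℂ] H))
    (hsummable : ∀ (S : H →L[ℂ] H) (x y : H),
      Summable fun n => ⟪S (R n x), R n y⟫_ℂ)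
    (hΦ : ∀ (S : H →L[ℂ] H) (x y : H),
      ⟪Φ S x, y⟫_ℂ = ∑' n, ⟪S (R n x), R n y⟫_ℂ)
    (B : H →L[ℂ] H) (hB : Φ B = B) :
    List.TFAE
      [∀ n, B * A n = A n * B,
       Φ (star B * B) = star B * B ∧ Φ (B * star B) = B * star B,
       ∀ b ∈ StarAlgebra.elemental ℂ B, Φ b = b] := by
  -- basic facts
  have hRsa : ∀ n, IsSelfAdjoint (R n) := fun n => (hR n).isSelfAdjoint
  have hAsa : ∀ n, IsSelfAdjoint (A n) := fun n => (hA n).isSelfAdjoint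
  -- `⟪R n z, R n y⟫ = ⟪A n z, y⟫`
  have hRR : ∀ n (z y : H), ⟪R n z, R n y⟫_ℂ = ⟪A n z, y⟫_ℂ := by
    intro n z y
    have h1 : ⟪ContinuousLinearMap.adjoint (R n) (R n z), y⟫_ℂ = ⟪R n z, R n y⟫_ℂ :=
      ContinuousLinearMap.adjoint_inner_left _ _ _
    rw [← h1, ← ContinuousLinearMap.star_eq_adjoint, hRsa n]
    have : R n (R n z) = A n z := by
      rw [← hR2 n]; rfl
    rw [this]
  -- `∑ₙ ⟪A n z, y⟫ = ⟪z, y⟫`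
  have hsum1 : ∀ z y : H, HasSum (fun n => ⟪A n z, y⟫_ℂ) ⟪z, y⟫_ℂ := by
    intro z y
    have h := ((hAsum z).mapL (innerSL ℂ y)).star
    simpa using h
  -- anything commuting with all `R n` is fixed by `Φ`
  have fixlem : ∀ S : H →L[ℂ] H, (∀ n, S * R n = R n * S) → Φ S = S := by
    intro S hS
    ext x
    refine ext_inner_right ℂ fun y => ?_
    rw [hΦ]
    have key : ∀ n, ⟪S (R n x), R n y⟫_ℂ = ⟪A n (S x), y⟫_ℂ := by
      intro n
      have h1 : S (R n x) = R n (S x) := by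
        have := congrFun (congrArg DFunLike.coe (hS n)) x
        simpa using this
      rw [h1, hRR]
    rw [tsum_congr key, (hsum1 (S x) y).tsum_eq]
  -- key: fixedness of `B` and `B*B` implies `B` commutes with all `R n`
  have commlem : Φ (star B * B) = star B * B → ∀ n, B * R n = R n * B := by
    intro hBB n0
    ext x
    have h1 : HasSum (fun n => ⟪B (R n x), B (R n x)⟫_ℂ) ⟪B x, B x⟫_ℂ := by
      have hs := (hsummable (star B * B) x x).hasSum
      rw [← hΦ (star B * B) x x, hBB] at hs
      have key : ∀ u v : H, ⟪(star B * B) u, v⟫_ℂ = ⟪B u, B v⟫_ℂ := by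
        intro u v
        rw [ContinuousLinearMap.mul_apply, ContinuousLinearMap.star_eq_adjoint,
          ContinuousLinearMap.adjoint_inner_left]
      simp only [key] at hs
      exact hs
    have h2 : HasSum (fun n => ⟪B (R n x), R n (B x)⟫_ℂ) ⟪B x, B x⟫_ℂ := by
      have hs := (hsummable B x (B x)).hasSum
      rw [← hΦ B x (B x), hB] at hs
      exact hs
    have h3 : HasSum (fun n => ⟪R n (B x), B (R n x)⟫_ℂ) ⟪B x, B x⟫_ℂ := by
      have hs := h2.star
      simpa using hs
    have h4 : HasSum (fun n => ⟪R n (B x), R n (B x)⟫_ℂ) ⟪B x, B x⟫_ℂ := by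
      simp only [hRR]
      exact hsum1 (B x) (B x)
    set d : ℕ → H := fun n => B (R n x) - R n (B x) with hd
    have hdsum : HasSum (fun n => ⟪d n, d n⟫_ℂ) 0 := by
      have h := ((h1.sub h2).sub h3).add h4
      have hfun : (fun n => ⟪d n, d n⟫_ℂ) = fun n =>
          ⟪B (R n x), B (R n x)⟫_ℂ - ⟪B (R n x), R n (B x)⟫_ℂ
            - ⟪R n (B x), B (R n x)⟫_ℂ + ⟪R n (B x), R n (B x)⟫_ℂ := by
        funext n
        simp only [hd, inner_sub_sub_self]
      have h0 : ⟪B x, B x⟫_ℂ - ⟪B x, B x⟫_ℂ - ⟪B x, B x⟫_ℂ + ⟪B x, B x⟫_ℂ = 0 := by ring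
      rw [hfun, ← h0]
      exact h
    have hreal : HasSum (fun n => ‖d n‖ ^ 2) (0 : ℝ) := by
      rw [← Complex.hasSum_ofReal]
      have hcast : ∀ n, ((‖d n‖ ^ 2 : ℝ) : ℂ) = ⟪d n, d n⟫_ℂ := by
        intro n
        rw [inner_self_eq_norm_sq_to_K]
        push_cast
        rfl
      simp only [hcast]
      simpa using hdsum
    have hle : ‖d n0‖ ^ 2 ≤ 0 := le_hasSum hreal n0 fun j _ => sq_nonneg _
    have hzero : d n0 = 0 := by
      have h := le_antisymm hle (sq_nonneg _)
      rw [pow_eq_zero_iff (two_ne_zero), norm_eq_zero] at h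
      exact h
    have : B (R n0 x) = R n0 (B x) := sub_eq_zero.mp hzero
    simpa using this
  tfae_have 2 → 1 := by
    intro h n
    have hc := commlem h.1 n
    rw [← hR2 n, ← mul_assoc, hc, mul_assoc, hc, mul_assoc]
  tfae_have 1 → 3 := by
    intro h b hb
    -- first: `B` and `star B` commute with each `R n`
    have hposA : ∀ n, (0 : H →L[ℂ] H) ≤ A n :=
      fun n => (ContinuousLinearMap.nonneg_iff_isPositive _).mpr (hA n)
    have hposR : ∀ n, (0 : H →L[ℂ] H) ≤ R n :=
      fun n => (ContinuousLinearMap.nonneg_iff_isPositive _).mpr (hR n)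
    have hRmem : ∀ n, R n ∈ StarSubalgebra.centralizer ℂ ({B} : Set (H →L[ℂ] H)) := by
      intro n
      have hRsqrt : R n = CFC.sqrt (A n) := (CFC.sqrt_unique (hR2 n) (hposR n)).symm
      have hAc : A n ∈ StarSubalgebra.centralizer ℂ ({B} : Set (H →L[ℂ] H)) := by
        rw [StarSubalgebra.mem_centralizer_iff]
        rintro g rfl
        refine ⟨h n, ?_⟩
        have := congrArg star (h n)
        simpa [star_mul, (hAsa n).star_eq] using this.symm
      have hclosed : IsClosed ((StarSubalgebra.centralizer ℂ ({B} : Set (H →L[ℂ] H)) :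
          Set (H →L[ℂ] H))) := by
        rw [StarSubalgebra.coe_centralizer]
        exact my_isClosed_centralizer _
      have hle := StarAlgebra.elemental.le_of_mem hclosed hAc
      rw [hRsqrt]
      exact hle (my_sqrt_mem_elemental (A n) (hposA n))
    -- hence every element of `C*(1,B)` commutes with each `R n`
    have hbR : ∀ n, b * R n = R n * b := by
      intro n
      have hBc : B ∈ StarSubalgebra.centralizer ℂ ({R n} : Set (H →L[ℂ] H)) := by
        rw [StarSubalgebra.mem_centralizer_iff]
        rintro g rfl
        have h1 := (StarSubalgebra.mem_centralizer_iff ℂ).mp (hRmem n) B rfl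
        exact ⟨h1.1.symm, by rw [(hRsa n).star_eq]; exact h1.1.symm⟩
      have hclosed : IsClosed ((StarSubalgebra.centralizer ℂ ({R n} : Set (H →L[ℂ] H)) :
          Set (H →L[ℂ] H))) := by
        rw [StarSubalgebra.coe_centralizer]
        exact my_isClosed_centralizer _
      have hle := StarAlgebra.elemental.le_of_mem hclosed hBc
      exact ((StarSubalgebra.mem_centralizer_iff ℂ).mp (hle hb) (R n) rfl).1.symm
    exact fixlem b hbR
  tfae_have 3 → 2 := by
    intro h
    exact ⟨h _ (mul_mem (star_mem (StarAlgebra.elemental.self_mem ℂ B))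
        (StarAlgebra.elemental.self_mem ℂ B)),
      h _ (mul_mem (StarAlgebra.elemental.self_mem ℂ B)
        (star_mem (StarAlgebra.elemental.self_mem ℂ B)))⟩
  tfae_finish
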